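/- Let T be a homogeneous tree with branching number b. Every doubleton {s,t} ⊆ T with s ≠ t belongs to one of the following three classes: (I) there exist a strong subtree F of T of height 3 and p ∈ {0,…,b−1} with {s,t} = {F(0), F(0)⌢_F p}; (II) there exist such F and p ≠ q with {s,t} = {F(0)⌢_F p, F(0)⌢_F q}; (III) there exist such F, p ≠ q and r with {s,t} = {F(0)⌢_F p, (F(0)⌢_F q)⌢_F r}. -/

import Mathlib

/-- Strict prefix relation on lists: the tree order on `b^{<ℕ}`. -/
def PLt {β : Type*} (s t : List β) : Prop := s <+: t ∧ s ≠ t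

/-- The level of a node `t` in the tree `T ⊆ b^{<ℕ}`: the number of its strict
predecessors (strict prefixes) lying in `T`. -/
noncomputable def lvl {β : Type*} (T : Set (List β)) (t : List β) : ℕ :=
  {s ∈ T | PLt s t}.ncard

/-- `t` is an immediate successor of `s` in the tree `T`. -/
def ImmSuc {β : Type*} (T : Set (List β)) (s t : List β) : Prop :=
  s ∈ T ∧ t ∈ T ∧ PLt s t ∧ ¬∃ u ∈ T, PLt s u ∧ PLt u t

/-- `T` is uniquely rooted: it has a node below all of its nodes. -/
def UniquelyRooted {β : Type*} (T : Set (List β)) : Prop :=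
  ∃ r ∈ T, ∀ t ∈ T, r <+: t

/-- `C` is a maximal chain of the tree `T`. -/
def MaxChainIn {β : Type*} (T C : Set (List β)) : Prop :=
  C ⊆ T ∧ (∀ s ∈ C, ∀ t ∈ C, s <+: t ∨ t <+: s) ∧
    ∀ C', C ⊆ C' → C' ⊆ T → (∀ s ∈ C', ∀ t ∈ C', s <+: t ∨ t <+: s) → C' = C

/-- `T` is balanced with all maximal chains of cardinality `h`
(i.e. balanced and of height `h`). -/
def BalancedOfHeight {β : Type*} (T : Set (List β)) (h : ℕ) : Prop :=
  ∀ C, MaxChainIn T C → C.Finite ∧ C.ncard = h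

/-- Every level of `S` is a subset of some level of `T`. -/
def LevelsAligned {β : Type*} (T S : Set (List β)) : Prop :=
  ∀ s ∈ S, ∀ s' ∈ S, lvl S s = lvl S s' → lvl T s = lvl T s'

/-- For every non-maximal node `s` of `S` and every immediate successor `t` of `s`
in `T` there is a unique immediate successor `s'` of `s` in `S` with `t ≤ s'`. -/
def SuccCond {β : Type*} (T S : Set (List β)) : Prop :=
  ∀ s ∈ S, (∃ x ∈ S, PLt s x) → ∀ t, ImmSuc T s t → ∃! s', ImmSuc S s s' ∧ t <+: s'

/-- `S` is a strong subtree of `T` of (finite) height `h`. -/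
def IsStrongSubtreeFin {β : Type*} (T S : Set (List β)) (h : ℕ) : Prop :=
  S ⊆ T ∧ S.Nonempty ∧ UniquelyRooted S ∧ BalancedOfHeight S h ∧
    LevelsAligned T S ∧ SuccCond T S

/-- `S` is a strong subtree of `T` of infinite height (uniquely rooted, balanced with
all maximal chains infinite, levels of `S` inside levels of `T`, successor condition). -/
def IsStrongSubtreeInf {β : Type*} (T S : Set (List β)) : Prop :=
  S ⊆ T ∧ S.Nonempty ∧ UniquelyRooted S ∧ (∀ s ∈ S, ∃ x ∈ S, PLt s x) ∧
    LevelsAligned T S ∧ SuccCond T S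

/-- `r` is the root of `S`. -/
def IsRoot {β : Type*} (S : Set (List β)) (r : List β) : Prop :=
  r ∈ S ∧ ∀ x ∈ S, r <+: x

/-- `v` is the immediate successor of `u` in `S` in direction `p`, i.e. the unique
immediate successor of `u` in `S` extending `u⌢p`. -/
def DirSucc {β : Type*} (S : Set (List β)) (u : List β) (p : β) (v : List β) : Prop :=
  ImmSuc S u v ∧ (u ++ [p]) <+: v

namespace Stmt17Aux
open List

variable {β : Type*}

lemma plt_of_prefix_lt {s t : List β} (h : s <+: t) (hl : s.length < t.length) : PLt s t :=
  ⟨h, fun e => by subst e; omega⟩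

lemma plt_length_lt {s t : List β} (h : PLt s t) : s.length < t.length := by
  rcases h with ⟨h1, h2⟩
  rcases lt_or_eq_of_le h1.length_le with h | h
  · exact h
  · exact absurd (h1.eq_of_length h) h2

lemma plt_trans {a b c : List β} (h1 : PLt a b) (h2 : PLt b c) : PLt a c :=
  plt_of_prefix_lt (h1.1.trans h2.1) ((plt_length_lt h1).trans (plt_length_lt h2))

lemma plt_trans_prefix {a b c : List β} (h1 : PLt a b) (h2 : b <+: c) : PLt a c :=
  plt_of_prefix_lt (h1.1.trans h2) (lt_of_lt_of_le (plt_length_lt h1) h2.length_le)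

lemma prefix_trans_plt {a b c : List β} (h1 : a <+: b) (h2 : PLt b c) : PLt a c :=
  plt_of_prefix_lt (h1.trans h2.1) (lt_of_le_of_lt h1.length_le (plt_length_lt h2))

lemma plt_irrefl (a : List β) : ¬ PLt a a := fun h => h.2 rfl

lemma plt_append {a : List β} (p : β) : PLt a (a ++ [p]) :=
  plt_of_prefix_lt ⟨[p], rfl⟩ (by simp)

/-- direction of `x` at `u` -/
lemma exists_dir {u x : List β} (h : PLt u x) : ∃ p, u ++ [p] <+: x := by
  rcases h.1 with ⟨rest, rfl⟩
  rcases rest with _ | ⟨p, rest⟩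
  · exact absurd (by simp) h.2
  · exact ⟨p, ⟨rest, by simp⟩⟩

lemma dir_unique {u x : List β} {p q : β} (hp : u ++ [p] <+: x) (hq : u ++ [q] <+: x) :
    p = q := by
  have := (List.prefix_or_prefix_of_prefix hp hq).elim
    (fun h => h.eq_of_length (by simp)) (fun h => (h.eq_of_length (by simp)).symm)
  simpa using this

lemma finite_prefixes (s : List β) : {x : List β | x <+: s}.Finite := by
  apply Set.Finite.subset (Set.finite_range fun k : Fin (s.length + 1) => s.take k)
  intro x hx
  refine ⟨⟨x.length, by have := hx.length_le; omega⟩, ?_⟩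
  exact (List.prefix_iff_eq_take.1 hx).symm

lemma finite_pred (T : Set (List β)) (u : List β) : {x ∈ T | PLt x u}.Finite :=
  (finite_prefixes u).subset (fun x hx => hx.2.1)

lemma lvl_le_of_prefix (T : Set (List β)) {u x : List β} (h : u <+: x) :
    lvl T u ≤ lvl T x := by
  apply Set.ncard_le_ncard _ (finite_pred T x)
  intro y hy
  exact ⟨hy.1, plt_trans_prefix hy.2 h⟩

lemma lvl_lt_of_plt {T : Set (List β)} {u x : List β} (hu : u ∈ T) (h : PLt u x) :
    lvl T u < lvl T x := by
  have hsub : insert u {y ∈ T | PLt y u} ⊆ {y ∈ T | PLt y x} := by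
    intro y hy
    rcases hy with rfl | hy
    · exact ⟨hu, h⟩
    · exact ⟨hy.1, plt_trans hy.2 h⟩
  have h1 : (insert u {y ∈ T | PLt y u}).ncard = lvl T u + 1 :=
    Set.ncard_insert_of_notMem (fun hc => plt_irrefl u hc.2) (finite_pred T u)
  have h2 := Set.ncard_le_ncard hsub (finite_pred T x)
  rw [h1] at h2
  exact Nat.lt_of_succ_le h2

lemma eq_of_prefix_lvl_eq {T : Set (List β)} {u x : List β} (hu : u ∈ T)
    (h : u <+: x) (hl : lvl T u = lvl T x) : u = x := by
  by_contra hne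
  exact absurd hl (Nat.ne_of_lt (lvl_lt_of_plt hu ⟨h, hne⟩))

lemma lvl_immSuc {T : Set (List β)} {u z : List β} (h : ImmSuc T u z) :
    lvl T z = lvl T u + 1 := by
  obtain ⟨hu, hz, huz, hno⟩ := h
  have : {y ∈ T | PLt y z} = insert u {y ∈ T | PLt y u} := by
    ext y
    constructor
    · rintro ⟨hyT, hyz⟩
      have hcomp := List.prefix_or_prefix_of_prefix hyz.1 huz.1
      rcases hcomp with hyu | huy
      · rcases eq_or_ne y u with rfl | hne
        · exact Set.mem_insert _ _
        · exact Set.mem_insert_of_mem _ ⟨hyT, hyu, hne⟩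
      · rcases eq_or_ne u y with rfl | hne
        · exact Set.mem_insert _ _
        · exact absurd ⟨y, hyT, ⟨huy, hne⟩, hyz⟩ hno
    · rintro (rfl | ⟨hyT, hyu⟩)
      · exact ⟨hu, huz⟩
      · exact ⟨hyT, plt_trans hyu huz⟩
  show {y ∈ T | PLt y z}.ncard = _
  rw [this, Set.ncard_insert_of_notMem (fun hc => plt_irrefl u hc.2) (finite_pred T u)]
  rfl

end Stmt17Aux

namespace Stmt17Aux

section TT
variable {b : ℕ} {T : Set (List (Fin b))} (hT : IsStrongSubtreeInf Set.univ T)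
include hT

lemma exists_unique_suc {u : List (Fin b)} (hu : u ∈ T) (p : Fin b) :
    ∃! z, ImmSuc T u z ∧ (u ++ [p]) <+: z := by
  apply hT.2.2.2.2.2 u hu (hT.2.2.2.1 u hu) (u ++ [p])
  refine ⟨trivial, trivial, plt_append p, ?_⟩
  rintro ⟨m, -, h1, h2⟩
  have := plt_length_lt h1
  have := plt_length_lt h2
  simp at this; omega

omit hT in
lemma step {u x : List (Fin b)} (hu : u ∈ T) (hx : x ∈ T) (h : PLt u x) :
    ∃ z, ImmSuc T u z ∧ z <+: x := by
  have key : ∀ n (x : List (Fin b)), x.length ≤ n → x ∈ T → PLt u x →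
      ∃ z, ImmSuc T u z ∧ z <+: x := by
    intro n
    induction n with
    | zero => intro x hlen _ h; have := plt_length_lt h; omega
    | succ n IH =>
      intro x hlen hx h
      by_cases hc : ∃ m ∈ T, PLt u m ∧ PLt m x
      · obtain ⟨m, hmT, hum, hmx⟩ := hc
        have hm : m.length ≤ n := by have := plt_length_lt hmx; omega
        obtain ⟨z, hz1, hz2⟩ := IH m hm hmT hum
        exact ⟨z, hz1, hz2.trans hmx.1⟩
      · exact ⟨x, ⟨hu, hx, h, hc⟩, List.prefix_rfl⟩
  exact key x.length x le_rfl hx h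

omit hT in
lemma step_dir {u x : List (Fin b)} (hu : u ∈ T) (hx : x ∈ T) (h : PLt u x)
    {p : Fin b} (hp : u ++ [p] <+: x) :
    ∃ z, ImmSuc T u z ∧ (u ++ [p]) <+: z ∧ z <+: x := by
  obtain ⟨z, hz1, hz2⟩ := step hu hx h
  refine ⟨z, hz1, ?_, hz2⟩
  rcases List.prefix_or_prefix_of_prefix hp hz2 with h' | h'
  · exact h'
  · have hl : u.length < z.length := plt_length_lt hz1.2.2.1
    have := h'.eq_of_length (by have := h'.length_le; simp at this ⊢; omega)
    rw [this]
  
lemma prefix_suc {u x : List (Fin b)} (hu : u ∈ T) (hx : x ∈ T) (h : PLt u x)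
    {p : Fin b} (hp : u ++ [p] <+: x) {t₀ : List (Fin b)}
    (ht₀ : ImmSuc T u t₀) (hpt : u ++ [p] <+: t₀) : t₀ <+: x := by
  obtain ⟨z, hz1, hz2, hz3⟩ := step_dir hu hx h hp
  obtain ⟨w, hw, huniq⟩ := exists_unique_suc hT hu p
  rw [huniq t₀ ⟨ht₀, hpt⟩, ← huniq z ⟨hz1, hz2⟩]
  exact hz3

lemma exists_above (p0 : Fin b) {u : List (Fin b)} (hu : u ∈ T) (k : ℕ) :
    ∃ x ∈ T, u <+: x ∧ lvl T x = lvl T u + k := by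
  induction k with
  | zero => exact ⟨u, hu, List.prefix_rfl, rfl⟩
  | succ k IH =>
    obtain ⟨x, hxT, hux, hlx⟩ := IH
    obtain ⟨z, ⟨hz, hzp⟩, -⟩ := exists_unique_suc hT hxT p0
    exact ⟨z, hz.2.1, hux.trans hz.2.2.1.1, by rw [lvl_immSuc hz, hlx]; omega⟩

omit hT in
lemma between {u x : List (Fin b)} (hu : u ∈ T) (hx : x ∈ T) (h : u <+: x)
    (ℓ : ℕ) (h1 : lvl T u ≤ ℓ) (h2 : ℓ ≤ lvl T x) :
    ∃ y ∈ T, u <+: y ∧ y <+: x ∧ lvl T y = ℓ := by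
  have key : ∀ n (u : List (Fin b)), u ∈ T → u <+: x → lvl T u ≤ ℓ →
      x.length - u.length ≤ n → ∃ y ∈ T, u <+: y ∧ y <+: x ∧ lvl T y = ℓ := by
    intro n
    induction n with
    | zero =>
      intro u hu hux hℓ hlen
      have : u = x := hux.eq_of_length (by have := hux.length_le; omega)
      subst this
      exact ⟨u, hu, List.prefix_rfl, List.prefix_rfl, le_antisymm hℓ h2⟩
    | succ n IH =>
      intro u hu hux hℓ hlen
      rcases eq_or_lt_of_le hℓ with he | hlt
      · exact ⟨u, hu, List.prefix_rfl, hux, he⟩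
      · have hne : u ≠ x := by
          rintro rfl; omega
        obtain ⟨z, hz1, hz2⟩ := step hu hx ⟨hux, hne⟩
        have hzl : lvl T z = lvl T u + 1 := lvl_immSuc hz1
        have : x.length - z.length ≤ n := by
          have := plt_length_lt hz1.2.2.1
          have := hz2.length_le
          omega
        obtain ⟨y, hy⟩ := IH z hz1.2.1 hz2 (by omega) this
        exact ⟨y, hy.1, (hz1.2.2.1).1.trans hy.2.1, hy.2.2⟩
  exact key (x.length - u.length) u hu h h1 le_rfl

end TT
end Stmt17Aux

namespace Stmt17Aux

section Construct
variable {b : ℕ} {T : Set (List (Fin b))} (hT : IsStrongSubtreeInf Set.univ T)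
include hT

lemma construct (hb : 0 < b) {r : List (Fin b)} (hr : r ∈ T) (ℓ1 ℓ2 : ℕ)
    (v : Fin b → List (Fin b)) (w : Fin b → Fin b → List (Fin b))
    (hv : ∀ p, v p ∈ T ∧ r ++ [p] <+: v p ∧ lvl T (v p) = ℓ1)
    (hw : ∀ p q, w p q ∈ T ∧ v p ++ [q] <+: w p q ∧ lvl T (w p q) = ℓ2) :
    ∃ S, IsStrongSubtreeFin T S 3 ∧ IsRoot S r ∧
      (∀ p, DirSucc S r p (v p)) ∧ (∀ p q, DirSucc S (v p) q (w p q)) := by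
  classical
  set S : Set (List (Fin b)) := insert r (Set.range v ∪ {x | ∃ p q, w p q = x}) with hSdef
  have memS : ∀ {x}, x ∈ S ↔ x = r ∨ (∃ p, v p = x) ∨ (∃ p q, w p q = x) := by
    intro x
    simp [hSdef, Set.mem_insert_iff, Set.mem_range, eq_comm]
  have memr : r ∈ S := memS.2 (Or.inl rfl)
  have memv : ∀ p, v p ∈ S := fun p => memS.2 (Or.inr (Or.inl ⟨p, rfl⟩))
  have memw : ∀ p q, w p q ∈ S := fun p q => memS.2 (Or.inr (Or.inr ⟨p, q, rfl⟩))
  have hrv : ∀ p, PLt r (v p) := fun p => plt_trans_prefix (plt_append p) (hv p).2.1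
  have hvw : ∀ p q, PLt (v p) (w p q) := fun p q =>
    plt_trans_prefix (plt_append q) (hw p q).2.1
  have hrw : ∀ p q, PLt r (w p q) := fun p q => plt_trans (hrv p) (hvw p q)
  set p₀ : Fin b := ⟨0, hb⟩ with hp₀
  have hℓ1 : lvl T r < ℓ1 := by
    have := lvl_lt_of_plt hr (hrv p₀); rwa [(hv p₀).2.2] at this
  have hℓ2 : ℓ1 < ℓ2 := by
    have := lvl_lt_of_plt (hv p₀).1 (hvw p₀ p₀)
    rwa [(hv p₀).2.2, (hw p₀ p₀).2.2] at this
  have hST : S ⊆ T := by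
    intro x hx
    rcases memS.1 hx with rfl | ⟨p, rfl⟩ | ⟨p, q, rfl⟩
    exacts [hr, (hv p).1, (hw p q).1]
  have hroot : ∀ x ∈ S, r <+: x := by
    intro x hx
    rcases memS.1 hx with rfl | ⟨p, rfl⟩ | ⟨p, q, rfl⟩
    exacts [List.prefix_rfl, (hrv p).1, (hrw p q).1]
  -- prefix facts
  have v_pre_v : ∀ {p p'}, v p <+: v p' → v p = v p' := fun {p p'} h =>
    eq_of_prefix_lvl_eq (hv p).1 h (by rw [(hv p).2.2, (hv p').2.2])
  have w_pre_w : ∀ {p q p' q'}, w p q <+: w p' q' → w p q = w p' q' := fun {p q p' q'} h =>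
    eq_of_prefix_lvl_eq (hw p q).1 h (by rw [(hw p q).2.2, (hw p' q').2.2])
  have v_pre_w : ∀ {p p' q'}, v p <+: w p' q' → p = p' := by
    intro p p' q' h
    exact dir_unique ((hv p).2.1.trans h) ((hv p').2.1.trans (hvw p' q').1)
  have not_w_pre_v : ∀ {p q p'}, ¬ w p q <+: v p' := by
    intro p q p' h
    have := lvl_le_of_prefix T h
    rw [(hw p q).2.2, (hv p').2.2] at this; omega
  have not_v_pre_r : ∀ {p}, ¬ v p <+: r := by
    intro p h
    have := lvl_le_of_prefix T h
    have := lvl_lt_of_plt hr (hrv p)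
    omega
  have not_w_pre_r : ∀ {p q}, ¬ w p q <+: r := by
    intro p q h
    have := lvl_le_of_prefix T h
    have := lvl_lt_of_plt hr (hrw p q)
    omega
  -- immediate successor structure
  have immS_r_v : ∀ p, ImmSuc S r (v p) := by
    intro p
    refine ⟨memr, memv p, hrv p, ?_⟩
    rintro ⟨u, huS, h1, h2⟩
    rcases memS.1 huS with rfl | ⟨p', rfl⟩ | ⟨p', q', rfl⟩
    · exact plt_irrefl _ h1
    · have := lvl_lt_of_plt (hv p').1 h2
      rw [(hv p').2.2, (hv p).2.2] at this; omega
    · exact not_w_pre_v h2.1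
  have immS_v_w : ∀ p q, ImmSuc S (v p) (w p q) := by
    intro p q
    refine ⟨memv p, memw p q, hvw p q, ?_⟩
    rintro ⟨u, huS, h1, h2⟩
    rcases memS.1 huS with rfl | ⟨p', rfl⟩ | ⟨p', q', rfl⟩
    · exact not_v_pre_r h1.1
    · have := lvl_lt_of_plt (hv p).1 h1
      rw [(hv p).2.2, (hv p').2.2] at this; omega
    · exact (h2.2 (w_pre_w h2.1))
  have imm_from_r : ∀ {s'}, ImmSuc S r s' → ∃ p, s' = v p := by
    rintro s' ⟨-, hs'S, h1, h2⟩
    rcases memS.1 hs'S with rfl | ⟨p, rfl⟩ | ⟨p, q, rfl⟩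
    · exact absurd h1 (plt_irrefl _)
    · exact ⟨p, rfl⟩
    · exact absurd ⟨v p, memv p, hrv p, hvw p q⟩ h2
  have imm_from_v : ∀ {p s'}, ImmSuc S (v p) s' → ∃ q, s' = w p q := by
    rintro p s' ⟨-, hs'S, h1, h2⟩
    rcases memS.1 hs'S with rfl | ⟨p', rfl⟩ | ⟨p', q', rfl⟩
    · exact absurd h1.1 not_v_pre_r
    · have := lvl_lt_of_plt (hv p).1 h1
      rw [(hv p).2.2, (hv p').2.2] at this; omega
    · obtain rfl := v_pre_w h1.1
      exact ⟨q', rfl⟩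
  -- distinctness
  have ne_r_v : ∀ p, r ≠ v p := fun p e => plt_irrefl r (e ▸ hrv p)
  have ne_r_w : ∀ p q, r ≠ w p q := fun p q e => plt_irrefl r (e ▸ hrw p q)
  have ne_v_w : ∀ p p' q', v p ≠ w p' q' := by
    intro p p' q' e
    have h2 : lvl T (v p) = lvl T (w p' q') := by rw [e]
    rw [(hv p).2.2, (hw p' q').2.2] at h2
    omega
  -- lvl S computations
  have lvlS_r : lvl S r = 0 := by
    have : {y ∈ S | PLt y r} = ∅ := by
      ext y
      simp only [Set.mem_setOf_eq, Set.mem_empty_iff_false, iff_false, not_and]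
      intro hyS hyr
      have h1 := (hroot y hyS).length_le
      have h2 := plt_length_lt hyr
      omega
    rw [lvl, this, Set.ncard_empty]
  have lvlS_v : ∀ p, lvl S (v p) = 1 := by
    intro p
    have : {y ∈ S | PLt y (v p)} = {r} := by
      ext y
      simp only [Set.mem_setOf_eq, Set.mem_singleton_iff]
      constructor
      · rintro ⟨hyS, hyv⟩
        rcases memS.1 hyS with rfl | ⟨p', rfl⟩ | ⟨p', q', rfl⟩
        · rfl
        · have := lvl_lt_of_plt (hv p').1 hyv
          rw [(hv p').2.2, (hv p).2.2] at this; omega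
        · exact absurd hyv.1 not_w_pre_v
      · rintro rfl
        exact ⟨memr, hrv p⟩
    rw [lvl, this, Set.ncard_singleton]
  have lvlS_w : ∀ p q, lvl S (w p q) = 2 := by
    intro p q
    have : {y ∈ S | PLt y (w p q)} = {r, v p} := by
      ext y
      simp only [Set.mem_setOf_eq, Set.mem_insert_iff, Set.mem_singleton_iff]
      constructor
      · rintro ⟨hyS, hyw⟩
        rcases memS.1 hyS with rfl | ⟨p', rfl⟩ | ⟨p', q', rfl⟩
        · exact Or.inl rfl
        · obtain rfl := v_pre_w hyw.1
          exact Or.inr rfl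
        · exact absurd (w_pre_w hyw.1) hyw.2
      · rintro (rfl | rfl)
        · exact ⟨memr, hrw p q⟩
        · exact ⟨memv p, hvw p q⟩
    rw [lvl, this, Set.ncard_pair (ne_r_v p)]
  -- LevelsAligned
  have hLA : LevelsAligned T S := by
    intro x hx x' hx' he
    rcases memS.1 hx with rfl | ⟨p, rfl⟩ | ⟨p, q, rfl⟩ <;>
      rcases memS.1 hx' with rfl | ⟨p', rfl⟩ | ⟨p', q', rfl⟩ <;>
      simp only [lvlS_r, lvlS_v, lvlS_w] at he <;> try omega
    · rw [(hv p).2.2, (hv p').2.2]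
    · rw [(hw p q).2.2, (hw p' q').2.2]
  -- SuccCond
  have hSC : SuccCond T S := by
    intro s₀ hs₀ hmax t₀ ht₀
    rcases memS.1 hs₀ with rfl | ⟨p, rfl⟩ | ⟨p, q, rfl⟩
    · obtain ⟨p, hp⟩ := exists_dir ht₀.2.2.1
      have ht₀v : t₀ <+: v p :=
        prefix_suc hT hr (hv p).1 (hrv p) (hv p).2.1 ht₀ hp
      refine ⟨v p, ⟨immS_r_v p, ht₀v⟩, ?_⟩
      rintro s' ⟨hs', hts'⟩
      obtain ⟨p', rfl⟩ := imm_from_r hs'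
      obtain rfl := dir_unique (hp.trans hts') (hv p').2.1
      rfl
    · obtain ⟨q, hq⟩ := exists_dir ht₀.2.2.1
      have ht₀w : t₀ <+: w p q :=
        prefix_suc hT (hv p).1 (hw p q).1 (hvw p q) (hw p q).2.1 ht₀ hq
      refine ⟨w p q, ⟨immS_v_w p q, ht₀w⟩, ?_⟩
      rintro s' ⟨hs', hts'⟩
      obtain ⟨q', rfl⟩ := imm_from_v hs'
      obtain rfl := dir_unique (hq.trans hts') (hw p q').2.1
      rfl
    · exfalso
      obtain ⟨x, hxS, hx⟩ := hmax
      rcases memS.1 hxS with rfl | ⟨p', rfl⟩ | ⟨p', q', rfl⟩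
      · exact not_w_pre_r hx.1
      · exact not_w_pre_v hx.1
      · exact hx.2 (w_pre_w hx.1)
  -- BalancedOfHeight
  have hBal : BalancedOfHeight S 3 := by
    rintro C ⟨hCS, hchain, hmaxC⟩
    have hrC : r ∈ C := by
      have hins : insert r C ⊆ S := Set.insert_subset memr hCS
      have hch : ∀ a ∈ insert r C, ∀ c ∈ insert r C, a <+: c ∨ c <+: a := by
        rintro a (rfl | ha) c (rfl | hc)
        · exact Or.inl List.prefix_rfl
        · exact Or.inl (hroot c (hCS hc))
        · exact Or.inr (hroot a (hCS ha))
        · exact hchain a ha c hc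
      have := hmaxC _ (Set.subset_insert _ _) hins hch
      rw [← this]; exact Set.mem_insert _ _
    -- all v's in C coincide; find a v in C
    have v_uniq : ∀ {p p'}, v p ∈ C → v p' ∈ C → v p = v p' := by
      intro p p' h1 h2
      rcases hchain _ h1 _ h2 with h | h
      · exact v_pre_v h
      · exact (v_pre_v h).symm
    have w_uniq : ∀ {p q p' q'}, w p q ∈ C → w p' q' ∈ C → w p q = w p' q' := by
      intro p q p' q' h1 h2
      rcases hchain _ h1 _ h2 with h | h
      · exact w_pre_w h
      · exact (w_pre_w h).symm
    have ins_chain : ∀ x ∈ S, (∀ c ∈ C, x <+: c ∨ c <+: x) → x ∈ C := by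
      intro x hxS hcomp
      have hins : insert x C ⊆ S := Set.insert_subset hxS hCS
      have hch : ∀ a ∈ insert x C, ∀ c ∈ insert x C, a <+: c ∨ c <+: a := by
        rintro a (rfl | ha) c (rfl | hc)
        · exact Or.inl List.prefix_rfl
        · exact hcomp c hc
        · exact (hcomp a ha).symm
        · exact hchain a ha c hc
      have := hmaxC _ (Set.subset_insert _ _) hins hch
      rw [← this]; exact Set.mem_insert _ _
    have hvC : ∃ p, v p ∈ C := by
      by_contra hc
      push_neg at hc
      by_cases hw' : ∃ p q, w p q ∈ C
      · obtain ⟨p, q, hpq⟩ := hw'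
        refine hc p (ins_chain (v p) (memv p) ?_)
        intro c hcC
        rcases memS.1 (hCS hcC) with rfl | ⟨p', rfl⟩ | ⟨p', q', rfl⟩
        · exact Or.inr (hroot _ (memv p))
        · exact absurd hcC (hc p')
        · have he := w_uniq hcC hpq
          rw [he]
          exact Or.inl (hvw p q).1
      · push_neg at hw'
        refine hc p₀ (ins_chain (v p₀) (memv p₀) ?_)
        intro c hcC
        rcases memS.1 (hCS hcC) with rfl | ⟨p', rfl⟩ | ⟨p', q', rfl⟩
        · exact Or.inr (hroot _ (memv p₀))
        · exact absurd hcC (hc p')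
        · exact absurd hcC (hw' p' q')
    obtain ⟨p, hpC⟩ := hvC
    have hwC : ∃ q, w p q ∈ C := by
      by_contra hc
      push_neg at hc
      have hnoW : ∀ p' q', w p' q' ∉ C := by
        intro p' q' hmem
        rcases hchain _ hpC _ hmem with h | h
        · obtain rfl := v_pre_w h
          exact hc q' hmem
        · exact not_w_pre_v h
      refine hc p₀ (ins_chain (w p p₀) (memw p p₀) ?_)
      intro c hcC
      rcases memS.1 (hCS hcC) with rfl | ⟨p', rfl⟩ | ⟨p', q', rfl⟩
      · exact Or.inr (hroot _ (memw p p₀))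
      · have he := v_uniq hcC hpC
        rw [he]
        exact Or.inr (hvw p p₀).1
      · exact absurd hcC (hnoW p' q')
    obtain ⟨q, hqC⟩ := hwC
    have hCeq : C = {r, v p, w p q} := by
      apply Set.Subset.antisymm
      · intro x hx
        rcases memS.1 (hCS hx) with rfl | ⟨p', rfl⟩ | ⟨p', q', rfl⟩
        · exact Set.mem_insert _ _
        · have he := v_uniq hx hpC
          rw [he]
          exact Set.mem_insert_iff.2 (Or.inr (Set.mem_insert _ _))
        · have he := w_uniq hx hqC
          rw [he]
          exact Set.mem_insert_iff.2 (Or.inr (Set.mem_insert_iff.2 (Or.inr rfl)))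
      · rintro x (rfl | rfl | rfl)
        exacts [hrC, hpC, hqC]
    refine ⟨by rw [hCeq]; exact Set.toFinite _, ?_⟩
    rw [hCeq, Set.ncard_insert_of_notMem ?_ (Set.toFinite _), Set.ncard_pair (ne_v_w p p q)]
    simp only [Set.mem_insert_iff, Set.mem_singleton_iff]
    push_neg
    exact ⟨ne_r_v p, ne_r_w p q⟩
  exact ⟨S, ⟨hST, ⟨r, memr⟩, ⟨r, memr, hroot⟩, hBal, hLA, hSC⟩, ⟨memr, hroot⟩,
    fun p => ⟨immS_r_v p, (hv p).2.1⟩, fun p q => ⟨immS_v_w p q, (hw p q).2.1⟩⟩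

end Construct
end Stmt17Aux

namespace Stmt17Aux
section Cases
variable {b : ℕ} {T : Set (List (Fin b))} (hT : IsStrongSubtreeInf Set.univ T)
include hT

lemma gen {r : List (Fin b)} (hr : r ∈ T) {ℓ1 : ℕ} (hℓ : lvl T r < ℓ1) (p : Fin b) :
    ∃ x, x ∈ T ∧ r ++ [p] <+: x ∧ lvl T x = ℓ1 := by
  obtain ⟨z, ⟨hz, hzp⟩, -⟩ := exists_unique_suc hT hr p
  have hzl : lvl T z = lvl T r + 1 := lvl_immSuc hz
  obtain ⟨x, hxT, hzx, hlx⟩ := exists_above hT p hz.2.1 (ℓ1 - (lvl T r + 1))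
  exact ⟨x, hxT, hzp.trans hzx, by omega⟩

lemma gen1 {u : List (Fin b)} (hu : u ∈ T) (q : Fin b) :
    ∃ x, x ∈ T ∧ u ++ [q] <+: x ∧ lvl T x = lvl T u + 1 := by
  obtain ⟨z, ⟨hz, hzp⟩, -⟩ := exists_unique_suc hT hu q
  exact ⟨z, hz.2.1, hzp, lvl_immSuc hz⟩

lemma classI (hb : 0 < b) {s t : List (Fin b)} (hs : s ∈ T) (ht : t ∈ T)
    (h : PLt s t) :
    ∃ S p, IsStrongSubtreeFin T S 3 ∧ IsRoot S s ∧ DirSucc S s p t := by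
  classical
  have hℓ : lvl T s < lvl T t := lvl_lt_of_plt hs h
  obtain ⟨p0, hp0⟩ := exists_dir h
  choose v' hv' using fun p => gen hT hs hℓ p
  set v : Fin b → List (Fin b) := fun p => if p = p0 then t else v' p with hvdef
  have hv : ∀ p, v p ∈ T ∧ s ++ [p] <+: v p ∧ lvl T (v p) = lvl T t := by
    intro p
    by_cases hpp : p = p0
    · subst hpp
      have e : v p = t := if_pos rfl
      rw [e]; exact ⟨ht, hp0, rfl⟩
    · have e : v p = v' p := if_neg hpp
      rw [e]; exact hv' p
  choose w hw using fun p q => gen1 hT (hv p).1 q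
  have hw' : ∀ p q, w p q ∈ T ∧ v p ++ [q] <+: w p q ∧ lvl T (w p q) = lvl T t + 1 := by
    intro p q
    refine ⟨(hw p q).1, (hw p q).2.1, ?_⟩
    rw [(hw p q).2.2, (hv p).2.2]
  obtain ⟨S, hS, hRoot, hDv, -⟩ :=
    construct hT hb hs (lvl T t) (lvl T t + 1) v w hv hw'
  refine ⟨S, p0, hS, hRoot, ?_⟩
  have : v p0 = t := if_pos rfl
  rw [← this]; exact hDv p0

lemma classII (hb : 0 < b) {r s t : List (Fin b)} (hrT : r ∈ T) (hs : s ∈ T)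
    (ht : t ∈ T) (hrs : PLt r s) (hrt : PLt r t) {ps pt : Fin b}
    (hps : r ++ [ps] <+: s) (hpt : r ++ [pt] <+: t) (hne : ps ≠ pt)
    (hl : lvl T s = lvl T t) :
    ∃ S, IsStrongSubtreeFin T S 3 ∧ IsRoot S r ∧ DirSucc S r ps s ∧ DirSucc S r pt t := by
  classical
  have hℓ : lvl T r < lvl T s := lvl_lt_of_plt hrT hrs
  choose v' hv' using fun p => gen hT hrT hℓ p
  set v : Fin b → List (Fin b) :=
    fun p => if p = ps then s else if p = pt then t else v' p with hvdef
  have hv : ∀ p, v p ∈ T ∧ r ++ [p] <+: v p ∧ lvl T (v p) = lvl T s := by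
    intro p
    by_cases h1 : p = ps
    · subst h1
      have e : v p = s := if_pos rfl
      rw [e]; exact ⟨hs, hps, rfl⟩
    · by_cases h2 : p = pt
      · subst h2
        have e : v p = t := (if_neg h1).trans (if_pos rfl)
        rw [e]; exact ⟨ht, hpt, hl.symm⟩
      · have e : v p = v' p := (if_neg h1).trans (if_neg h2)
        rw [e]; exact hv' p
  choose w hw using fun p q => gen1 hT (hv p).1 q
  have hw' : ∀ p q, w p q ∈ T ∧ v p ++ [q] <+: w p q ∧ lvl T (w p q) = lvl T s + 1 := by
    intro p q
    refine ⟨(hw p q).1, (hw p q).2.1, ?_⟩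
    rw [(hw p q).2.2, (hv p).2.2]
  obtain ⟨S, hS, hRoot, hDv, -⟩ :=
    construct hT hb hrT (lvl T s) (lvl T s + 1) v w hv hw'
  have e1 : v ps = s := if_pos rfl
  have e2 : v pt = t := (if_neg (Ne.symm hne)).trans (if_pos rfl)
  exact ⟨S, hS, hRoot, e1 ▸ hDv ps, e2 ▸ hDv pt⟩

lemma classIII (hb : 0 < b) {r s t : List (Fin b)} (hrT : r ∈ T) (hs : s ∈ T)
    (ht : t ∈ T) (hrs : PLt r s) (hrt : PLt r t) {ps pt : Fin b}
    (hps : r ++ [ps] <+: s) (hpt : r ++ [pt] <+: t) (hne : ps ≠ pt)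
    (hl : lvl T s < lvl T t) :
    ∃ S x rr, IsStrongSubtreeFin T S 3 ∧ IsRoot S r ∧ DirSucc S r ps s ∧
      DirSucc S r pt x ∧ DirSucc S x rr t := by
  classical
  have hℓ : lvl T r < lvl T s := lvl_lt_of_plt hrT hrs
  obtain ⟨z, hzimm, hzpre, hzt⟩ := step_dir hrT ht hrt hpt
  have hzl : lvl T z = lvl T r + 1 := lvl_immSuc hzimm
  obtain ⟨x, hxT, hzx, hxt, hxl⟩ :=
    between hzimm.2.1 ht hzt (lvl T s) (by omega) (le_of_lt hl)
  have hxnet : x ≠ t := fun e => by rw [e] at hxl; omega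
  obtain ⟨rr, hrr⟩ := exists_dir (⟨hxt, hxnet⟩ : PLt x t)
  choose v' hv' using fun p => gen hT hrT hℓ p
  set v : Fin b → List (Fin b) :=
    fun p => if p = ps then s else if p = pt then x else v' p with hvdef
  have hv : ∀ p, v p ∈ T ∧ r ++ [p] <+: v p ∧ lvl T (v p) = lvl T s := by
    intro p
    by_cases h1 : p = ps
    · subst h1
      have e : v p = s := if_pos rfl
      rw [e]; exact ⟨hs, hps, rfl⟩
    · by_cases h2 : p = pt
      · subst h2
        have e : v p = x := (if_neg h1).trans (if_pos rfl)
        rw [e]; exact ⟨hxT, hzpre.trans hzx, hxl⟩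
      · have e : v p = v' p := (if_neg h1).trans (if_neg h2)
        rw [e]; exact hv' p
  have e2 : v pt = x := (if_neg (Ne.symm hne)).trans (if_pos rfl)
  choose w' hw' using fun (p q : Fin b) =>
    gen hT (hv p).1 (show lvl T (v p) < lvl T t by rw [(hv p).2.2]; omega) q
  set w : Fin b → Fin b → List (Fin b) :=
    fun p q => if p = pt ∧ q = rr then t else w' p q with hwdef
  have hw : ∀ p q, w p q ∈ T ∧ v p ++ [q] <+: w p q ∧ lvl T (w p q) = lvl T t := by
    intro p q
    by_cases hc : p = pt ∧ q = rr
    · obtain ⟨rfl, rfl⟩ := hc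
      have e : w p q = t := if_pos ⟨rfl, rfl⟩
      rw [e]; exact ⟨ht, by rw [e2]; exact hrr, rfl⟩
    · have e : w p q = w' p q := if_neg hc
      rw [e]; exact hw' p q
  obtain ⟨S, hS, hRoot, hDv, hDw⟩ :=
    construct hT hb hrT (lvl T s) (lvl T t) v w hv hw
  have e1 : v ps = s := if_pos rfl
  have e3 : w pt rr = t := if_pos ⟨rfl, rfl⟩
  refine ⟨S, x, rr, hS, hRoot, e1 ▸ hDv ps, e2 ▸ hDv pt, ?_⟩
  have := hDw pt rr
  rw [e2, e3] at this
  exact this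

end Cases
end Stmt17Aux

theorem stmt17 (b : ℕ) (hb : 2 ≤ b)
    (T : Set (List (Fin b))) (hT : IsStrongSubtreeInf Set.univ T)
    (s t : List (Fin b)) (hs : s ∈ T) (ht : t ∈ T) (hst : s ≠ t) :
    (∃ (S : Set (List (Fin b))) (r v : List (Fin b)) (p : Fin b),
        IsStrongSubtreeFin T S 3 ∧ IsRoot S r ∧ DirSucc S r p v ∧
        ({s, t} : Set (List (Fin b))) = {r, v}) ∨
    (∃ (S : Set (List (Fin b))) (r vp vq : List (Fin b)) (p q : Fin b),
        IsStrongSubtreeFin T S 3 ∧ IsRoot S r ∧ p ≠ q ∧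
        DirSucc S r p vp ∧ DirSucc S r q vq ∧
        ({s, t} : Set (List (Fin b))) = {vp, vq}) ∨
    (∃ (S : Set (List (Fin b))) (r vp vq w : List (Fin b)) (p q rr : Fin b),
        IsStrongSubtreeFin T S 3 ∧ IsRoot S r ∧ p ≠ q ∧
        DirSucc S r p vp ∧ DirSucc S r q vq ∧ DirSucc S vq rr w ∧
        ({s, t} : Set (List (Fin b))) = {vp, w}) := by
  classical
  have hb1 : 0 < b := by omega
  by_cases h1 : s <+: t
  · left
    obtain ⟨S, p, hS, hRoot, hD⟩ := Stmt17Aux.classI hT hb1 hs ht ⟨h1, hst⟩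
    exact ⟨S, s, t, p, hS, hRoot, hD, rfl⟩
  · by_cases h2 : t <+: s
    · left
      obtain ⟨S, p, hS, hRoot, hD⟩ := Stmt17Aux.classI hT hb1 ht hs ⟨h2, Ne.symm hst⟩
      exact ⟨S, t, s, p, hS, hRoot, hD, Set.pair_comm s t⟩
    · obtain ⟨r0, hr0T, hr0⟩ := hT.2.2.1
      have hAfin : {x ∈ T | x <+: s ∧ x <+: t}.Finite :=
        (Stmt17Aux.finite_prefixes s).subset (fun x hx => hx.2.1)
      have hAne : {x ∈ T | x <+: s ∧ x <+: t}.Nonempty :=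
        ⟨r0, hr0T, hr0 s hs, hr0 t ht⟩
      obtain ⟨r, hrA, hrmax⟩ :=
        hAfin.exists_maximalFor (fun x => x.length) _ hAne
      obtain ⟨hrT2, hrs, hrt⟩ := hrA
      have hrnes : r ≠ s := fun e => h1 (e ▸ hrt)
      have hrnet : r ≠ t := fun e => h2 (e ▸ hrs)
      have hrsP : PLt r s := ⟨hrs, hrnes⟩
      have hrtP : PLt r t := ⟨hrt, hrnet⟩
      obtain ⟨ps, hps⟩ := Stmt17Aux.exists_dir hrsP
      obtain ⟨pt, hpt⟩ := Stmt17Aux.exists_dir hrtP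
      have hne : ps ≠ pt := by
        intro e
        subst e
        obtain ⟨z, hzimm, hzpre, hzs⟩ := Stmt17Aux.step_dir hrT2 hs hrsP hps
        have hzt : z <+: t := Stmt17Aux.prefix_suc hT hrT2 ht hrtP hpt hzimm hzpre
        have hle := @hrmax z ⟨hzimm.2.1, hzs, hzt⟩
          (Stmt17Aux.plt_length_lt hzimm.2.2.1).le
        have := Stmt17Aux.plt_length_lt hzimm.2.2.1
        simp only at hle
        omega
      rcases lt_trichotomy (lvl T s) (lvl T t) with hlt | heq | hgt
      · right; right
        obtain ⟨S, x, rr, hS, hRoot, hDs, hDx, hDt⟩ :=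
          Stmt17Aux.classIII hT hb1 hrT2 hs ht hrsP hrtP hps hpt hne hlt
        exact ⟨S, r, s, x, t, ps, pt, rr, hS, hRoot, hne, hDs, hDx, hDt, rfl⟩
      · right; left
        obtain ⟨S, hS, hRoot, hDs, hDt⟩ :=
          Stmt17Aux.classII hT hb1 hrT2 hs ht hrsP hrtP hps hpt hne heq
        exact ⟨S, r, s, t, ps, pt, hS, hRoot, hne, hDs, hDt, rfl⟩
      · right; right
        obtain ⟨S, x, rr, hS, hRoot, hDt, hDx, hDs⟩ :=
          Stmt17Aux.classIII hT hb1 hrT2 ht hs hrtP hrsP hpt hps (Ne.symm hne) hgt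
        exact ⟨S, r, t, x, s, pt, ps, rr, hS, hRoot, Ne.symm hne, hDt, hDx, hDs,
          Set.pair_comm s t⟩
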